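/- Let E be a Banach lattice with strictly monotone norm (i.e., ‖f‖ < ‖g‖ whenever 0 ≤ f ≤ g and f ≠ g) and let T : E → E be a positive linear contraction. Then the fixed space of T is a sublattice of E: for every f with Tf = f, one has T|f| = |f|. -/

import Mathlib

/-- If `E` is a Banach lattice with strictly monotone norm and `T` is a positive
linear contraction on `E`, then the fixed space of `T` is a sublattice:
`T f = f` implies `T |f| = |f|`. -/
theorem fixed_space_sublattice_of_strictly_monotone_norm
    {E : Type*} [NormedAddCommGroup E] [Lattice E] [HasSolidNorm E] [IsOrderedAddMonoid E] [NormedSpace ℝ E] [CompleteSpace E]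
    (hsm : ∀ f g : E, 0 ≤ f → f ≤ g → f ≠ g → ‖f‖ < ‖g‖)
    (T : E →L[ℝ] E) (hpos : ∀ f : E, 0 ≤ f → 0 ≤ T f) (hcontr : ‖T‖ ≤ 1) :
    ∀ f : E, T f = f → T |f| = |f| := by
  intro f hf
  have hmono : ∀ a b : E, a ≤ b → T a ≤ T b := by
    intro a b hab
    have h := hpos (b - a) (sub_nonneg.mpr hab)
    rw [map_sub] at h
    exact sub_nonneg.mp h
  have h1 : f ≤ T |f| := by
    have := hmono f |f| (le_abs_self f)
    rwa [hf] at this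
  have h2 : -f ≤ T |f| := by
    have := hmono (-f) |f| (abs_neg f ▸ le_abs_self (-f))
    rwa [map_neg, hf] at this
  have hle : |f| ≤ T |f| := by rw [abs]; exact sup_le h1 h2
  by_contra hne
  have hlt : ‖|f|‖ < ‖T |f|‖ := hsm _ _ (abs_nonneg f) hle (fun h => hne h.symm)
  have hnorm : ‖T |f|‖ ≤ ‖|f|‖ := by
    calc ‖T |f|‖ ≤ ‖T‖ * ‖|f|‖ := T.le_opNorm _
    _ ≤ 1 * ‖|f|‖ := by
        exact mul_le_mul_of_nonneg_right hcontr (norm_nonneg _)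
    _ = ‖|f|‖ := one_mul _
  linarith
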